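/- For every real x ≥ 1/e and every natural number m with m ≥ e·x, the tail of the exponential series satisfies ∑_{r ≥ m} x^r/r! ≤ (e^{1/2}/(√(2π)(e−1))) · x^{-1/2}. -/

import Mathlib

open Real

lemma stirling_lower (n : ℕ) (hn : 1 ≤ n) :
    Real.sqrt (2 * Real.pi * n) * ((n : ℝ) / Real.exp 1) ^ n ≤ (Nat.factorial n : ℝ) := by
  have hpi : Real.sqrt Real.pi ≤ Stirling.stirlingSeq n := by
    obtain ⟨k, rfl⟩ : ∃ k, n = k + 1 := ⟨n - 1, by omega⟩
    have htend : Filter.Tendsto (Stirling.stirlingSeq ∘ Nat.succ) Filter.atTop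
        (nhds (Real.sqrt Real.pi)) :=
      Stirling.tendsto_stirlingSeq_sqrt_pi.comp (Filter.tendsto_add_atTop_nat 1)
    exact Stirling.stirlingSeq'_antitone.le_of_tendsto htend k
  have hden : 0 < Real.sqrt (2 * n) * ((n : ℝ) / Real.exp 1) ^ n := by
    have : (0:ℝ) < n := by exact_mod_cast hn
    positivity
  have := (le_div_iff₀ hden).mp hpi
  calc Real.sqrt (2 * Real.pi * n) * ((n : ℝ) / Real.exp 1) ^ n
      = Real.sqrt Real.pi * (Real.sqrt (2 * n) * ((n : ℝ) / Real.exp 1) ^ n) := by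
        rw [show 2 * Real.pi * (n:ℝ) = Real.pi * (2 * n) by ring,
          Real.sqrt_mul Real.pi_pos.le]; ring
    _ ≤ (Nat.factorial n : ℝ) := by
        simpa [Stirling.stirlingSeq] using this

theorem exp_tail_bound (x : ℝ) (hx : 1 / Real.exp 1 ≤ x)
    (m : ℕ) (hm : Real.exp 1 * x ≤ (m : ℝ)) :
    ∑' r : ℕ, x ^ (m + r) / (Nat.factorial (m + r) : ℝ) ≤
      (Real.exp (1 / 2) / (Real.sqrt (2 * Real.pi) * (Real.exp 1 - 1))) *
        x ^ (-(1 / 2) : ℝ) := by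
  have hE : (1:ℝ) < Real.exp 1 := by
    have := Real.add_one_lt_exp (by norm_num : (1:ℝ) ≠ 0); linarith
  have hE0 : (0:ℝ) < Real.exp 1 := by linarith
  have hx0 : 0 < x := lt_of_lt_of_le (by positivity) hx
  have hm1 : 1 ≤ m := by
    by_contra h
    push_neg at h
    interval_cases m
    · simp at hm
      nlinarith
  have hm0 : (0:ℝ) < m := by exact_mod_cast hm1
  set C : ℝ := x ^ m / (Nat.factorial m : ℝ) with hC
  have hC0 : 0 ≤ C := by positivity
  have hr : (0:ℝ) ≤ (Real.exp 1)⁻¹ := by positivity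
  have hr1 : (Real.exp 1)⁻¹ < 1 := by
    rw [inv_lt_one_iff₀]; right; exact hE
  -- termwise bound
  have key : ∀ r : ℕ, x ^ (m + r) / (Nat.factorial (m + r) : ℝ) ≤ C * (Real.exp 1)⁻¹ ^ r := by
    intro r
    have hfac : (Nat.factorial m : ℝ) * (m : ℝ) ^ r ≤ (Nat.factorial (m + r) : ℝ) := by
      have h1 : Nat.factorial m * m ^ r ≤ Nat.factorial m * (m + 1) ^ r :=
        Nat.mul_le_mul_left _ (Nat.pow_le_pow_left (by omega) r)
      have h2 := Nat.factorial_mul_pow_le_factorial (m := m) (n := r)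
      exact_mod_cast h1.trans h2
    have hxm : x / m ≤ (Real.exp 1)⁻¹ := by
      rw [div_le_iff₀ hm0, inv_mul_eq_div, le_div_iff₀ hE0]
      linarith
    calc x ^ (m + r) / (Nat.factorial (m + r) : ℝ)
        ≤ x ^ (m + r) / ((Nat.factorial m : ℝ) * (m : ℝ) ^ r) := by
          apply div_le_div_of_nonneg_left (by positivity) (by positivity) hfac
      _ = C * (x / m) ^ r := by
          rw [pow_add, hC, div_pow]; field_simp
      _ ≤ C * (Real.exp 1)⁻¹ ^ r := by
          apply mul_le_mul_of_nonneg_left _ hC0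
          exact pow_le_pow_left₀ (by positivity) hxm r
  have hsumg : Summable (fun r : ℕ => C * (Real.exp 1)⁻¹ ^ r) :=
    (summable_geometric_of_lt_one hr hr1).mul_left C
  have hsumf : Summable (fun r : ℕ => x ^ (m + r) / (Nat.factorial (m + r) : ℝ)) :=
    Summable.of_nonneg_of_le (fun r => by positivity) key hsumg
  have step1 : ∑' r : ℕ, x ^ (m + r) / (Nat.factorial (m + r) : ℝ)
      ≤ C * (1 - (Real.exp 1)⁻¹)⁻¹ := by
    calc ∑' r : ℕ, x ^ (m + r) / (Nat.factorial (m + r) : ℝ)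
        ≤ ∑' r : ℕ, C * (Real.exp 1)⁻¹ ^ r := Summable.tsum_le_tsum key hsumf hsumg
      _ = C * (1 - (Real.exp 1)⁻¹)⁻¹ := by
          rw [tsum_mul_left, tsum_geometric_of_lt_one hr hr1]
  refine step1.trans ?_
  -- bound C
  have hstir := stirling_lower m hm1
  have hxm : x ≤ (m : ℝ) / Real.exp 1 := (le_div_iff₀ hE0).mpr (by linarith [hm])
  have hCle : C ≤ (Real.sqrt (2 * Real.pi * m))⁻¹ := by
    rw [hC, div_le_iff₀ (by positivity)]
    have h1 : x ^ m ≤ ((m : ℝ) / Real.exp 1) ^ m := pow_le_pow_left₀ hx0.le hxm m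
    have h2 : (Real.sqrt (2 * Real.pi * m))⁻¹ * (Real.sqrt (2 * Real.pi * m) * ((m : ℝ) / Real.exp 1) ^ m)
        ≤ (Real.sqrt (2 * Real.pi * m))⁻¹ * (Nat.factorial m : ℝ) :=
      mul_le_mul_of_nonneg_left hstir (by positivity)
    have hs : (0:ℝ) < Real.sqrt (2 * Real.pi * m) := by
      apply Real.sqrt_pos.mpr; positivity
    calc x ^ m ≤ ((m : ℝ) / Real.exp 1) ^ m := h1
      _ = (Real.sqrt (2 * Real.pi * m))⁻¹ * (Real.sqrt (2 * Real.pi * m) * ((m : ℝ) / Real.exp 1) ^ m) := by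
          field_simp
      _ ≤ (Real.sqrt (2 * Real.pi * m))⁻¹ * (Nat.factorial m : ℝ) := h2
  have hmono : Real.sqrt (2 * Real.pi * (Real.exp 1 * x)) ≤ Real.sqrt (2 * Real.pi * m) :=
    Real.sqrt_le_sqrt (by nlinarith [Real.pi_pos])
  have hCle2 : C ≤ (Real.sqrt (2 * Real.pi * (Real.exp 1 * x)))⁻¹ := by
    refine hCle.trans ?_
    exact inv_anti₀ (Real.sqrt_pos.mpr (by positivity)) hmono
  -- final algebra
  have hsplit : Real.sqrt (2 * Real.pi * (Real.exp 1 * x))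
      = Real.sqrt (2 * Real.pi) * Real.sqrt (Real.exp 1) * Real.sqrt x := by
    rw [Real.sqrt_mul (by positivity), Real.sqrt_mul hE0.le]; ring
  have hxneg : x ^ (-(1/2) : ℝ) = (Real.sqrt x)⁻¹ := by
    rw [Real.rpow_neg hx0.le, Real.sqrt_eq_rpow]
  have hexp : Real.exp (1/2 : ℝ) = Real.sqrt (Real.exp 1) := by
    rw [show (1/2 : ℝ) = 1/2 by norm_num, ← Real.exp_half]
  have hEm1 : (0:ℝ) < Real.exp 1 - 1 := by linarith
  have hgeo : (1 - (Real.exp 1)⁻¹)⁻¹ = Real.exp 1 / (Real.exp 1 - 1) := by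
    rw [show (1 - (Real.exp 1)⁻¹) = (Real.exp 1 - 1) / Real.exp 1 by field_simp, inv_div]
  have hsE : (0:ℝ) < Real.sqrt (Real.exp 1) := Real.sqrt_pos.mpr hE0
  have hsx : (0:ℝ) < Real.sqrt x := Real.sqrt_pos.mpr hx0
  have hs2pi : (0:ℝ) < Real.sqrt (2 * Real.pi) := Real.sqrt_pos.mpr (by positivity)
  have hsEsq : Real.sqrt (Real.exp 1) * Real.sqrt (Real.exp 1) = Real.exp 1 :=
    Real.mul_self_sqrt hE0.le
  rw [hxneg, hexp, hgeo]
  calc C * (Real.exp 1 / (Real.exp 1 - 1))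
      ≤ (Real.sqrt (2 * Real.pi * (Real.exp 1 * x)))⁻¹ * (Real.exp 1 / (Real.exp 1 - 1)) :=
        mul_le_mul_of_nonneg_right hCle2 (by positivity)
    _ = Real.sqrt (Real.exp 1) / (Real.sqrt (2 * Real.pi) * (Real.exp 1 - 1)) * (Real.sqrt x)⁻¹ := by
        rw [hsplit]
        field_simp
        linear_combination (-1 : ℝ) * hsEsq
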